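/- Let F : ℝ^n ⇒ ℝ^m be a set-valued mapping with (x̄,ȳ) ∈ gph F. Assume dom F := {x : F(x) ≠ ∅} is a nonempty closed convex set and gph F is locally closed around (x̄,ȳ). Then F has the relative Aubin property around (x̄,ȳ) (the Aubin property with respect to dom F) if and only if D̄*F(x̄,ȳ)(0) = {0}, where D̄*F := D*_{dom F} F is the limiting coderivative with respect to dom F. -/

import Mathlib

open Set Metric Filter Topology
open scoped RealInnerProductSpace

variable {E : Type*} [NormedAddCommGroup E] [InnerProductSpace ℝ E]
variable {F' : Type*} [NormedAddCommGroup F'] [InnerProductSpace ℝ F']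

/-- `Π(x,Ω)`: the set of closest points (Euclidean projectors) of `x` in `Ω`. -/
def projSet (x : E) (Ω : Set E) : Set E := {u | u ∈ Ω ∧ ‖u - x‖ = Metric.infDist x Ω}

/-- `Π⁻¹(u,Ω)`. -/
def projInv (u : E) (Ω : Set E) : Set E := {x | u ∈ projSet x Ω}

/-- The proximal normal cone to `Ω` at `x` with respect to `C`:
`N^p_C(x,Ω) = {v | ∃ t > 0, x + t v ∈ Π⁻¹(x, Ω ∩ C) ∩ C}`. -/
def proxNC (C Ω : Set E) (x : E) : Set E :=
  {v | ∃ t > (0 : ℝ), x + t • v ∈ projInv x (Ω ∩ C) ∩ C}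

/-- The limiting normal cone to `Ω` at `x` with respect to `C`
(sequential Painlevé–Kuratowski outer limit of `N^p_C(·,Ω)` over `Ω ∩ C ∋ x_k → x`). -/
def limNC (C Ω : Set E) (x : E) : Set E :=
  {v | ∃ (xs vs : ℕ → E),
    (∀ k, xs k ∈ Ω ∩ C) ∧ Filter.Tendsto xs Filter.atTop (nhds x) ∧
    (∀ k, vs k ∈ proxNC C Ω (xs k)) ∧ Filter.Tendsto vs Filter.atTop (nhds v)}

/-- A pair `(x,y)` as an element of the `L²` (Euclidean) product. -/
noncomputable def toL2 (x : E) (y : F') : WithLp 2 (E × F') :=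
  (WithLp.equiv 2 (E × F')).symm (x, y)

/-- The graph of a set-valued map, inside the `L²` product. -/
def gphL2 (F : E → Set F') : Set (WithLp 2 (E × F')) :=
  {p | ((WithLp.equiv 2 (E × F')) p).2 ∈ F ((WithLp.equiv 2 (E × F')) p).1}

/-- The cylinder `C × ℝ^m` inside the `L²` product. -/
def cylL2 (C : Set E) : Set (WithLp 2 (E × F')) :=
  {p | ((WithLp.equiv 2 (E × F')) p).1 ∈ C}

/-- The limiting coderivative of `F` at `(xb,yb)` with respect to `C`:
`D*_C F(xb,yb)(y*) = {x* | (x*,-y*) ∈ N_{C×ℝ^m}((xb,yb), gph F_C)}`. -/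
noncomputable def coderivWRT (C : Set E) (F : E → Set F') (xb : E) (yb : F')
    (ystar : F') : Set E :=
  {xstar | toL2 xstar (-ystar) ∈ limNC (cylL2 C) (gphL2 F ∩ cylL2 C) (toL2 xb yb)}

/-- `F` has the Aubin property with respect to `C` around `(xb,yb)` with constant `k`:
there are neighborhoods `U` of `xb` and `V` of `yb` with
`F(u) ∩ V ⊆ F(x) + k‖u−x‖·𝔹` for all `x,u ∈ C ∩ U`. -/
def AubinWRT (C : Set E) (F : E → Set F') (xb : E) (yb : F') (k : ℝ) : Prop :=
  ∃ U ∈ nhds xb, ∃ V ∈ nhds yb, ∀ x ∈ C ∩ U, ∀ u ∈ C ∩ U, ∀ y ∈ F u ∩ V,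
    ∃ y' ∈ F x, ‖y - y'‖ ≤ k * ‖u - x‖

set_option linter.unusedSectionVars false
set_option linter.unusedVariables false

lemma sqrt_sq_add_le {A e : ℝ} (hA : 0 < A) (he : 0 ≤ e) :
    Real.sqrt (A^2 + e) ≤ A + e/(2*A) := by
  rw [show A^2 + e = (A + e/(2*A))^2 - (e/(2*A))^2 by field_simp; ring]
  calc Real.sqrt ((A + e/(2*A))^2 - (e/(2*A))^2) ≤ Real.sqrt ((A + e/(2*A))^2) := by
        apply Real.sqrt_le_sqrt; nlinarith [sq_nonneg (e/(2*A))]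
    _ = A + e/(2*A) := Real.sqrt_sq (by positivity)

lemma fst_le_c {κ p q V : ℝ} (hκ : 0 ≤ κ) (hp : 0 ≤ p) (hq : 0 ≤ q) (hV : 0 ≤ V)
    (h1 : p ≤ κ * q) (h2 : p^2 + q^2 ≤ V^2) :
    p ≤ (κ / Real.sqrt (1+κ^2)) * V := by
  have hs : (0:ℝ) < Real.sqrt (1+κ^2) := Real.sqrt_pos.2 (by positivity)
  rw [div_mul_eq_mul_div, le_div_iff₀ hs]
  have h3 : (p * Real.sqrt (1+κ^2))^2 ≤ (κ * V)^2 := by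
    rw [mul_pow, Real.sq_sqrt (by positivity)]
    nlinarith [sq_nonneg q, sq_nonneg p]
  exact (pow_le_pow_iff_left₀ (by positivity) (by positivity) two_ne_zero).mp h3

lemma glob {Z : Type*} [NormedAddCommGroup Z] [ProperSpace Z] {S : Set Z} {zb : Z} {r : ℝ}
    (hzb : zb ∈ S) (hcl : IsClosed (S ∩ closedBall zb r)) {z : Z} (hz : dist z zb ≤ r/2) :
    ∃ w, w ∈ S ∩ closedBall zb r ∧ dist z w = infDist z S ∧ w ∈ projSet z S ∧
      dist z w ≤ dist z zb := by
  have hrr : 0 ≤ r := by have := dist_nonneg (x := z) (y := zb); linarith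
  have hzbΩ : zb ∈ S ∩ closedBall zb r := ⟨hzb, by simp [hrr]⟩
  have hΩc : IsCompact (S ∩ closedBall zb r) :=
    (isCompact_closedBall zb r).of_isClosed_subset hcl inter_subset_right
  obtain ⟨w, hwΩ, hwd⟩ := hΩc.exists_infDist_eq_dist ⟨zb, hzbΩ⟩ z
  have hle : infDist z (S ∩ closedBall zb r) ≤ dist z zb := infDist_le_dist_of_mem hzbΩ
  have heq : infDist z S = infDist z (S ∩ closedBall zb r) := by
    refine le_antisymm (infDist_le_infDist_of_subset inter_subset_left ⟨zb, hzbΩ⟩) ?_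
    by_contra hlt
    push_neg at hlt
    obtain ⟨g, hg, hdg⟩ := (infDist_lt_iff ⟨zb, hzb⟩).mp hlt
    have h1 : dist z g < dist z zb := hdg.trans_le hle
    have hgΩ : g ∈ S ∩ closedBall zb r := ⟨hg, by
      rw [mem_closedBall]
      calc dist g zb ≤ dist g z + dist z zb := dist_triangle _ _ _
        _ ≤ r/2 + r/2 := add_le_add (by rw [dist_comm]; exact h1.le.trans hz) hz
        _ = r := by ring⟩
    exact absurd (infDist_le_dist_of_mem hgΩ) (not_le.mpr hdg)
  refine ⟨w, hwΩ, by rw [heq, hwd], ⟨hwΩ.1, ?_⟩, ?_⟩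
  · rw [heq, hwd, dist_comm, dist_eq_norm]
  · exact hwd ▸ hle

lemma proxmem {C : Set E} {S : Set E} (hsub : S ⊆ C) {z w : E}
    (hw : w ∈ projSet z S) (hzC : z ∈ C) : z - w ∈ proxNC C S w := by
  have hz' : w + (1:ℝ) • (z - w) = z := by simp
  refine ⟨1, one_pos, ?_, ?_⟩ <;> rw [hz']
  · show w ∈ projSet z (S ∩ C)
    rwa [inter_eq_left.2 hsub]
  · exact hzC

lemma proxNC_smul {C Ω : Set E} {x v : E} (hv : v ∈ proxNC C Ω x) {c : ℝ} (hc : 0 < c) :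
    c • v ∈ proxNC C Ω x := by
  obtain ⟨t, ht, h⟩ := hv
  exact ⟨t / c, by positivity, by rwa [smul_smul, div_mul_cancel₀ _ hc.ne']⟩

lemma prox_ineq {C : Set (WithLp 2 (E × F'))} {S : Set (WithLp 2 (E × F'))} (hsub : S ⊆ C)
    {z v : WithLp 2 (E × F')} (hv : v ∈ proxNC C S z) :
    z ∈ S ∧ ∃ t > (0:ℝ), z + t • v ∈ C ∧ ∀ g ∈ S, ⟪v, g - z⟫ ≤ ‖g - z‖^2 / (2*t) := by
  obtain ⟨t, ht, h1, h2⟩ := hv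
  rw [inter_eq_left.2 hsub] at h1
  obtain ⟨hzS, hnorm⟩ := h1
  refine ⟨hzS, t, ht, h2, fun g hg => ?_⟩
  have key : ‖z - (z + t • v)‖ ≤ ‖g - (z + t • v)‖ := by
    rw [hnorm]
    calc infDist (z + t • v) S ≤ dist (z + t • v) g := infDist_le_dist_of_mem hg
      _ = ‖g - (z + t • v)‖ := by rw [dist_eq_norm, norm_sub_rev]
  have e1 : ‖z - (z + t • v)‖ = t * ‖v‖ := by simp [norm_smul, abs_of_pos ht]
  have e2 : g - (z + t • v) = (g - z) - t • v := by abel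
  have key2 : (t*‖v‖)^2 ≤ ‖(g - z) - t • v‖^2 := by
    rw [← e1, ← e2]
    exact pow_le_pow_left₀ (norm_nonneg _) key 2
  rw [norm_sub_sq_real, real_inner_smul_right, norm_smul, Real.norm_eq_abs,
    abs_of_pos ht, mul_pow] at key2
  rw [le_div_iff₀ (by positivity)]
  nlinarith [key2, real_inner_comm v (g - z)]

-- basic toL2 lemmas
lemma norm_toL2_sq (x : E) (y : F') : ‖toL2 x y‖^2 = ‖x‖^2 + ‖y‖^2 :=
  WithLp.prod_norm_sq_eq_of_L2 _
lemma norm_toL2_left (x : E) : ‖toL2 x (0:F')‖ = ‖x‖ := by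
  have h := norm_toL2_sq x (0:F')
  rw [norm_zero] at h
  have h2 : ‖toL2 x (0:F')‖^2 = ‖x‖^2 := by simpa using h
  calc ‖toL2 x (0:F')‖ = Real.sqrt (‖toL2 x (0:F')‖^2) := (Real.sqrt_sq (norm_nonneg _)).symm
    _ = Real.sqrt (‖x‖^2) := by rw [h2]
    _ = ‖x‖ := Real.sqrt_sq (norm_nonneg _)

lemma aux_cont_fst : Continuous fun p : WithLp 2 (E × F') => p.fst :=
  continuous_fst.comp (WithLp.prod_continuous_ofLp 2 E F')
lemma aux_cont_snd : Continuous fun p : WithLp 2 (E × F') => p.snd :=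
  continuous_snd.comp (WithLp.prod_continuous_ofLp 2 E F')

lemma aux_norm_fst_le (p : WithLp 2 (E × F')) : ‖p.fst‖ ≤ ‖p‖ := by
  have h := WithLp.prod_norm_sq_eq_of_L2 p
  calc ‖p.fst‖ = Real.sqrt (‖p.fst‖^2) := (Real.sqrt_sq (norm_nonneg _)).symm
    _ ≤ Real.sqrt (‖p.fst‖^2 + ‖p.snd‖^2) := Real.sqrt_le_sqrt (le_add_of_nonneg_right (by positivity))
    _ = ‖p‖ := by rw [← h, Real.sqrt_sq (norm_nonneg _)]
lemma aux_norm_snd_le (p : WithLp 2 (E × F')) : ‖p.snd‖ ≤ ‖p‖ := by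
  have h := WithLp.prod_norm_sq_eq_of_L2 p
  calc ‖p.snd‖ = Real.sqrt (‖p.snd‖^2) := (Real.sqrt_sq (norm_nonneg _)).symm
    _ ≤ Real.sqrt (‖p.fst‖^2 + ‖p.snd‖^2) := Real.sqrt_le_sqrt (le_add_of_nonneg_left (by positivity))
    _ = ‖p‖ := by rw [← h, Real.sqrt_sq (norm_nonneg _)]

lemma aux_dist_fst_le (p q : WithLp 2 (E × F')) : dist p.fst q.fst ≤ dist p q := by
  rw [dist_eq_norm, dist_eq_norm]
  exact aux_norm_fst_le (p - q)
lemma aux_dist_snd_le (p q : WithLp 2 (E × F')) : dist p.snd q.snd ≤ dist p q := by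
  rw [dist_eq_norm, dist_eq_norm]
  exact aux_norm_snd_le (p - q)

lemma norm_toL2_right (y : F') : ‖toL2 (0:E) y‖ = ‖y‖ := by
  have h := norm_toL2_sq (0:E) y
  rw [norm_zero] at h
  have h2 : ‖toL2 (0:E) y‖^2 = ‖y‖^2 := by simpa using h
  calc ‖toL2 (0:E) y‖ = Real.sqrt (‖toL2 (0:E) y‖^2) := (Real.sqrt_sq (norm_nonneg _)).symm
    _ = Real.sqrt (‖y‖^2) := by rw [h2]
    _ = ‖y‖ := Real.sqrt_sq (norm_nonneg _)

lemma dist_toL2_le (a p : E) (b q : F') :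
    dist (toL2 a b) (toL2 p q) ≤ ‖a - p‖ + ‖b - q‖ := by
  rw [dist_eq_norm]
  have h1 : toL2 a b - toL2 p q = toL2 (a-p) (0:F') + toL2 (0:E) (b-q) := by
    show toL2 (a-p) (b-q) = toL2 ((a-p) + 0) (0 + (b-q))
    rw [add_zero, zero_add]
  rw [h1]
  calc ‖toL2 (a-p) (0:F') + toL2 (0:E) (b-q)‖
      ≤ ‖toL2 (a-p) (0:F')‖ + ‖toL2 (0:E) (b-q)‖ := norm_add_le _ _
    _ = ‖a-p‖ + ‖b-q‖ := by rw [norm_toL2_left, norm_toL2_right]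

lemma dist_toL2_fst (a p : E) (b : F') : dist (toL2 a b) (toL2 p b) = ‖a - p‖ := by
  rw [dist_eq_norm]
  show ‖toL2 (a - p) (b - b)‖ = _
  rw [sub_self, norm_toL2_left]

section MainProof
variable [ProperSpace (WithLp 2 (E × F'))] [CompleteSpace F']

set_option maxHeartbeats 1000000 in
lemma seg {F : E → Set F'} {C : Set E} {xb : E} {yb : F'} {r κ ε ρ : ℝ}
    (hgraph : yb ∈ F xb) (hcl : IsClosed (gphL2 F ∩ closedBall (toL2 xb yb) r))
    (hsub : gphL2 F ⊆ cylL2 C) (hconv : Convex ℝ C) (hκ : 0 ≤ κ)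
    (hpne : ∀ z ∈ gphL2 F, dist z (toL2 xb yb) ≤ ε →
      ∀ v ∈ proxNC (cylL2 C) (gphL2 F ∩ cylL2 C) z,
        ‖(v : WithLp 2 (E × F')).fst‖ ≤ κ * ‖v.snd‖)
    (hρε : 3*ρ ≤ ε) (hρr : 4*ρ ≤ r)
    {x u : E} {y : F'} (hxC : x ∈ C) (hy : y ∈ F u)
    (hu : dist (toL2 u y) (toL2 xb yb) ≤ ρ) (hxu : ‖x - u‖ ≤ ρ) :
    infDist (toL2 x y) (gphL2 F) ≤ (κ / Real.sqrt (1+κ^2)) * ‖x - u‖ := by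
  classical
  set zb := toL2 xb yb with hzb
  set L := ‖x - u‖ with hL
  set c := κ / Real.sqrt (1+κ^2) with hc
  have hc0 : 0 ≤ c := by rw [hc]; positivity
  have hc1 : c < 1 := by
    rw [hc, div_lt_one (Real.sqrt_pos.2 (by positivity))]
    nth_rewrite 1 [show κ = Real.sqrt (κ^2) from (Real.sqrt_sq hκ).symm]
    exact Real.sqrt_lt_sqrt (by positivity) (by nlinarith)
  have hL0 : 0 ≤ L := norm_nonneg _
  have hρ0 : 0 ≤ ρ := le_trans dist_nonneg hu
  have hzbS : zb ∈ gphL2 F := hgraph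
  have huC : u ∈ C := hsub (show toL2 u y ∈ gphL2 F from hy)
  set γ : ℝ → WithLp 2 (E × F') := fun s => toL2 (u + s•(x-u)) y with hγ
  have hγ0 : γ 0 = toL2 u y := by rw [hγ]; simp
  have hγ1 : γ 1 = toL2 x y := by rw [hγ]; simp
  have hγsub : ∀ s s' : ℝ, γ s - γ s' = toL2 ((s - s')•(x-u)) (0:F') := by
    intro s s'
    show toL2 ((u + s•(x-u)) - (u + s'•(x-u))) (y - y) = _
    rw [sub_self]
    congr 1
    rw [sub_smul]; abel
  have hγd : ∀ s s' : ℝ, dist (γ s) (γ s') = |s - s'| * L := by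
    intro s s'
    rw [dist_eq_norm, hγsub, norm_toL2_left, norm_smul, Real.norm_eq_abs]
  have hγcont : Continuous γ := by
    apply (WithLp.prod_continuous_toLp 2 E F').comp
    exact (continuous_const.add (continuous_id.smul continuous_const)).prodMk continuous_const
  set h : ℝ → ℝ := fun s => infDist (γ s) (gphL2 F) with hh
  have hcont : Continuous h := (continuous_infDist_pt (s := gphL2 F)).comp hγcont
  have h0 : h 0 = 0 := by rw [hh]; simp only [hγ0]; exact infDist_zero_of_mem hy
  have hlip : ∀ s s' : ℝ, h s ≤ h s' + |s - s'| * L := by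
    intro s s'
    rw [hh, ← hγd s s']
    exact infDist_le_infDist_add_dist
  have hub : ∀ s : ℝ, 0 ≤ s → h s ≤ s * L := by
    intro s hs
    have := hlip s 0
    rw [h0, sub_zero, abs_of_nonneg hs] at this
    linarith
  have hpos : ∀ s : ℝ, s ∈ Icc (0:ℝ) 1 → dist (γ s) zb ≤ 2*ρ := by
    intro s hs
    calc dist (γ s) zb ≤ dist (γ s) (γ 0) + dist (γ 0) zb := dist_triangle _ _ _
      _ ≤ 1 * L + ρ := by
          rw [hγd, hγ0, sub_zero, abs_of_nonneg hs.1]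
          exact add_le_add (mul_le_mul_of_nonneg_right hs.2 hL0) hu
      _ ≤ 2*ρ := by rw [one_mul]; linarith [hxu]
  have hnonneg : ∀ s, 0 ≤ h s := fun s => infDist_nonneg
  -- the frequent slope estimate
  have hf' : ∀ s ∈ Ico (0:ℝ) 1, ∀ r', (if h s = 0 then L else c*L) < r' →
      ∃ᶠ z in 𝓝[>] s, slope h s z < r' := by
    intro s hs r' hr'
    by_cases hzero : h s = 0
    · rw [if_pos hzero] at hr'
      apply Filter.Eventually.frequently
      filter_upwards [eventually_mem_nhdsWithin] with z hz
      have hzs : (0:ℝ) < z - s := sub_pos.2 hz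
      have hb : h z ≤ (z - s) * L := by
        have h2 := hlip z s
        rw [hzero, zero_add, abs_of_pos hzs] at h2
        exact h2
      rw [slope_def_field, hzero, sub_zero, div_lt_iff₀ hzs]
      calc h z ≤ (z - s) * L := hb
        _ < r' * (z - s) := by nlinarith
    · rw [if_neg hzero] at hr'
      have hhs : 0 < h s := lt_of_le_of_ne (hnonneg s) (Ne.symm hzero)
      -- global projection
      have hd2 : dist (γ s) zb ≤ r/2 := by
        have := hpos s ⟨hs.1, hs.2.le⟩; linarith
      obtain ⟨w, hwΩ, hwdist, hwproj, -⟩ := glob hzbS hcl hd2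
      have hwh : dist (γ s) w = h s := hwdist
      have hwz : dist w zb ≤ ε := by
        have h1 : dist w (γ s) ≤ ρ := by
          rw [dist_comm, hwh]
          exact le_trans (hub s hs.1) (by nlinarith [hs.2.le, hs.1])
        calc dist w zb ≤ dist w (γ s) + dist (γ s) zb := dist_triangle _ _ _
          _ ≤ ρ + 2*ρ := add_le_add h1 (hpos s ⟨hs.1, hs.2.le⟩)
          _ ≤ ε := by linarith
      have hγsC : γ s ∈ cylL2 C := by
        show u + s•(x-u) ∈ C
        exact hconv.add_smul_sub_mem huC hxC ⟨hs.1, hs.2.le⟩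
      set v := γ s - w with hv
      have hproxv : v ∈ proxNC (cylL2 C) (gphL2 F ∩ cylL2 C) w := by
        rw [inter_eq_left.2 hsub]
        exact proxmem hsub hwproj hγsC
      have hvfs : ‖v.fst‖ ≤ κ * ‖v.snd‖ := hpne w hwΩ.1 hwz v hproxv
      have hvnorm : ‖v‖ = h s := by rw [hv, ← dist_eq_norm, hwh]
      have hfc : ‖v.fst‖ ≤ c * h s := by
        apply fst_le_c hκ (norm_nonneg _) (norm_nonneg _) (hnonneg s) hvfs
        rw [← hvnorm]
        exact le_of_eq (WithLp.prod_norm_sq_eq_of_L2 v).symm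
      set e : WithLp 2 (E × F') := toL2 (x-u) (0:F') with he
      have hγδ : ∀ δ : ℝ, γ (s+δ) - γ s = δ • e := by
        intro δ
        rw [hγsub, add_sub_cancel_left]
        have hre : δ • e = toL2 (δ•(x-u)) (δ•(0:F')) := rfl
        rw [hre, smul_zero]
      have hee : ‖e‖ = L := norm_toL2_left _
      have hinner : ⟪v, e⟫ ≤ c * h s * L := by
        rw [WithLp.prod_inner_apply]
        have h1 : (WithLp.ofLp e).snd = 0 := rfl
        have h2 : (WithLp.ofLp e).fst = x - u := rfl
        rw [h1, h2, inner_zero_right, add_zero]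
        calc ⟪v.fst, x - u⟫ ≤ ‖v.fst‖ * ‖x - u‖ := real_inner_le_norm _ _
          _ ≤ c * h s * L := by rw [← hL]; exact mul_le_mul_of_nonneg_right hfc hL0
      -- quantitative forward bound
      have hfwd : ∀ δ : ℝ, 0 < δ → h (s+δ) ≤ h s + δ*(c*L) + δ^2*L^2/(2*h s) := by
        intro δ hδ
        have key : h (s+δ) ≤ ‖v + δ • e‖ := by
          have : γ (s+δ) - w = v + δ • e := by rw [hv, ← hγδ δ]; abel
          calc h (s+δ) ≤ dist (γ (s+δ)) w := infDist_le_dist_of_mem hwΩ.1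
            _ = ‖v + δ • e‖ := by rw [dist_eq_norm, this]
        have expand : ‖v + δ • e‖^2 = ‖v‖^2 + 2*δ*⟪v,e⟫ + δ^2*L^2 := by
          rw [norm_add_sq_real, real_inner_smul_right, norm_smul, Real.norm_eq_abs,
            abs_of_pos hδ, mul_pow, hee]
          ring
        have hexp2 : ‖v + δ • e‖^2 ≤ (h s)^2 + (2*δ*(c * h s * L) + δ^2*L^2) := by
          rw [expand, hvnorm]
          have := mul_le_mul_of_nonneg_left hinner (by positivity : (0:ℝ) ≤ 2*δ)
          nlinarith
        have hsqrt : ‖v + δ • e‖ ≤ h s + (2*δ*(c * h s * L) + δ^2*L^2)/(2*h s) := by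
          calc ‖v + δ • e‖ = Real.sqrt (‖v + δ • e‖^2) := (Real.sqrt_sq (norm_nonneg _)).symm
            _ ≤ Real.sqrt ((h s)^2 + (2*δ*(c * h s * L) + δ^2*L^2)) := Real.sqrt_le_sqrt hexp2
            _ ≤ h s + (2*δ*(c * h s * L) + δ^2*L^2)/(2*h s) :=
                sqrt_sq_add_le hhs (by positivity)
        have heq2 : (2*δ*(c * h s * L) + δ^2*L^2)/(2*h s) = δ*(c*L) + δ^2*L^2/(2*h s) := by
          field_simp
        rw [heq2] at hsqrt
        linarith [key.trans hsqrt]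
      -- choose δ₀
      set δ₀ : ℝ := (r' - c*L) * h s / (L^2 + 1) with hδ₀
      have hδ₀pos : 0 < δ₀ := by
        rw [hδ₀]
        have : 0 < r' - c*L := by linarith
        positivity
      apply Filter.Eventually.frequently
      filter_upwards [Ioc_mem_nhdsGT_of_mem (show s ∈ Ico s (s+δ₀) by
        constructor <;> [exact le_rfl; linarith])] with z hz
      have hδz : 0 < z - s := sub_pos.2 hz.1
      have hbound := hfwd (z - s) hδz
      rw [add_sub_cancel] at hbound
      rw [slope_def_field, div_lt_iff₀ hδz]
      have hzs : z - s ≤ δ₀ := by linarith [hz.2]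
      have hstep : (z-s)^2*L^2/(2*h s) ≤ (z-s) * ((r' - c*L)/2) := by
        rw [pow_two, mul_assoc, mul_div_assoc]
        apply mul_le_mul_of_nonneg_left _ hδz.le
        rw [div_le_div_iff₀ (by positivity) two_pos]
        calc (z-s)*L^2*2 ≤ δ₀ * L^2 * 2 := by nlinarith [sq_nonneg L]
          _ = (r' - c*L) * h s * (L^2 * 2) / (L^2+1) := by rw [hδ₀]; ring
          _ ≤ (r' - c*L) * (2 * h s) := by
              rw [div_le_iff₀ (by positivity : (0:ℝ) < L^2+1)]
              nlinarith [sq_nonneg L, hhs.le, sub_pos.2 hr']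
      calc h z - h s ≤ (z-s)*(c*L) + (z-s)^2*L^2/(2*h s) := by linarith
        _ ≤ (z-s)*(c*L) + (z-s)*((r' - c*L)/2) := by linarith
        _ < r' * (z-s) := by nlinarith [sub_pos.2 hr']
  -- fencing
  have main : ∀ ε₀ : ℝ, 0 < ε₀ → h 1 ≤ (c*L + ε₀) * 1 + ε₀ := by
    intro ε₀ hε₀
    have := image_le_of_liminf_slope_right_lt_deriv_boundary
      (f := h) (f' := fun s => if h s = 0 then L else c*L) (a := 0) (b := 1)
      (hcont.continuousOn)
      hf'
      (B := fun s => (c*L + ε₀) * s + ε₀) (B' := fun _ => c*L + ε₀)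
      (by rw [h0]; simp; positivity)
      (fun s => by
        simpa using ((hasDerivAt_id s).const_mul (c*L + ε₀)).add_const ε₀)
      (fun s hs heq => by
        have hBpos : 0 < (c*L + ε₀) * s + ε₀ := by nlinarith [hs.1, mul_nonneg hc0 hL0]
        show (if h s = 0 then L else c * L) < c*L + ε₀
        rw [if_neg (by rw [heq]; exact ne_of_gt hBpos)]
        linarith)
    exact this (right_mem_Icc.2 zero_le_one)
  have hfin : h 1 ≤ c * L := by
    apply le_of_forall_sub_le
    intro ε₀ hε₀
    have := main (ε₀/2) (by positivity)
    linarith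
  have h2 : infDist (γ 1) (gphL2 F) ≤ c * L := hfin
  rwa [hγ1] at h2

lemma pne_of_coderiv {F : E → Set F'} {C : Set E} {xb : E} {yb : F'}
    [ProperSpace (WithLp 2 (E × F'))]
    (hsub : gphL2 F ⊆ cylL2 C)
    (hcod : coderivWRT C F xb yb 0 ⊆ {0}) :
    ∃ κ ≥ (0:ℝ), ∃ ε > (0:ℝ), ∀ z ∈ gphL2 F, dist z (toL2 xb yb) ≤ ε →
      ∀ v ∈ proxNC (cylL2 C) (gphL2 F ∩ cylL2 C) z,
        ‖(v : WithLp 2 (E × F')).fst‖ ≤ κ * ‖v.snd‖ := by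
  classical
  set zb := toL2 xb yb with hzb
  by_contra hcon
  push_neg at hcon
  have H : ∀ k : ℕ, ∃ z ∈ gphL2 F, dist z zb ≤ 1/(k+1) ∧
      ∃ v ∈ proxNC (cylL2 C) (gphL2 F ∩ cylL2 C) z,
        ((k:ℝ)+1) * ‖(v : WithLp 2 (E × F')).snd‖ < ‖v.fst‖ := by
    intro k
    obtain ⟨z, hz1, hz2, v, hv1, hv2⟩ := hcon ((k:ℝ)+1) (by positivity) (1/(k+1)) (by positivity)
    exact ⟨z, hz1, hz2, v, hv1, hv2⟩
  choose zs hzs hzd vs hvs hlt using H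
  have hfstpos : ∀ k, 0 < ‖(vs k).fst‖ := fun k =>
    lt_of_le_of_lt (by positivity) (hlt k)
  set ws : ℕ → WithLp 2 (E × F') := fun k => (‖(vs k).fst‖)⁻¹ • vs k with hws
  have hwprox : ∀ k, ws k ∈ proxNC (cylL2 C) (gphL2 F ∩ cylL2 C) (zs k) :=
    fun k => proxNC_smul (hvs k) (inv_pos.2 (hfstpos k))
  have hwfst : ∀ k, ‖(ws k).fst‖ = 1 := by
    intro k
    have : (ws k).fst = (‖(vs k).fst‖)⁻¹ • (vs k).fst := rfl
    rw [this, norm_smul, norm_inv, norm_norm, inv_mul_cancel₀ (hfstpos k).ne']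
  have hwsnd : ∀ k, ‖(ws k).snd‖ ≤ 1/(k+1) := by
    intro k
    have h1 : (ws k).snd = (‖(vs k).fst‖)⁻¹ • (vs k).snd := rfl
    rw [h1, norm_smul, norm_inv, norm_norm]
    rw [inv_mul_le_iff₀ (hfstpos k), mul_one_div, le_div_iff₀ (by positivity : (0:ℝ) < (k:ℝ)+1)]
    calc ‖(vs k).snd‖ * ((k:ℝ)+1) = ((k:ℝ)+1) * ‖(vs k).snd‖ := by ring
      _ ≤ ‖(vs k).fst‖ := (hlt k).le
  have hwball : ∀ k, ws k ∈ closedBall (0 : WithLp 2 (E × F')) 2 := by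
    intro k
    rw [mem_closedBall, dist_zero_right]
    have h := WithLp.prod_norm_sq_eq_of_L2 (ws k)
    have h1 : ‖ws k‖^2 ≤ 2^2 := by
      rw [h, hwfst k]
      have := hwsnd k
      have h2 : ‖(ws k).snd‖ ≤ 1 := le_trans this (by
        rw [div_le_one (by positivity : (0:ℝ) < (k:ℝ)+1)]
        have : (0:ℝ) ≤ (k:ℝ) := Nat.cast_nonneg k
        linarith)
      nlinarith [norm_nonneg (ws k).snd]
    exact (pow_le_pow_iff_left₀ (norm_nonneg _) (by norm_num) two_ne_zero).mp h1
  obtain ⟨a, -, φ, hφ, hconv⟩ := (isCompact_closedBall (0 : WithLp 2 (E × F')) 2).tendsto_subseq hwball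
  have hone : Tendsto (fun _ : ℕ => (1:ℝ)) atTop (𝓝 ‖a.fst‖) := by
    have h1 : Tendsto (fun k => ‖(ws (φ k)).fst‖) atTop (𝓝 ‖a.fst‖) :=
      ((continuous_norm.comp aux_cont_fst).tendsto a).comp hconv
    simpa [hwfst] using h1
  have hafst : ‖a.fst‖ = 1 := by
    have := tendsto_nhds_unique hone tendsto_const_nhds
    linarith [this]
  have hzero : Tendsto (fun k : ℕ => 1/((k:ℝ)+1)) atTop (𝓝 0) :=
    tendsto_one_div_add_atTop_nhds_zero_nat
  have hasnd : a.snd = 0 := by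
    have h1 : Tendsto (fun k => (ws (φ k)).snd) atTop (𝓝 a.snd) :=
      ((aux_cont_snd).tendsto a).comp hconv
    have h2 : Tendsto (fun k => (ws (φ k)).snd) atTop (𝓝 (0:F')) := by
      apply squeeze_zero_norm (fun k => ?_) hzero
      calc ‖(ws (φ k)).snd‖ ≤ 1/((φ k : ℝ)+1) := hwsnd (φ k)
        _ ≤ 1/((k:ℝ)+1) := by
            apply one_div_le_one_div_of_le (by positivity)
            have hk : (k:ℝ) ≤ (φ k : ℝ) := Nat.cast_le.mpr hφ.le_apply
            linarith
    exact tendsto_nhds_unique h1 h2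
  have hmem : a.fst ∈ coderivWRT C F xb yb 0 := by
    show toL2 a.fst (-(0:F')) ∈ limNC (cylL2 C) (gphL2 F ∩ cylL2 C) zb
    have heq : toL2 a.fst (-(0:F')) = a := by
      rw [neg_zero, ← hasnd]
      rfl
    rw [heq]
    have hmem2 : ∀ k, zs (φ k) ∈ (gphL2 F ∩ cylL2 C) ∩ cylL2 C :=
      fun k => ⟨⟨hzs (φ k), hsub (hzs (φ k))⟩, hsub (hzs (φ k))⟩
    refine ⟨fun k => zs (φ k), fun k => ws (φ k), hmem2, ?_, fun k => hwprox (φ k), hconv⟩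
    rw [tendsto_iff_dist_tendsto_zero]
    apply squeeze_zero (fun k => dist_nonneg)
    · intro k
      calc dist (zs (φ k)) zb ≤ 1/((φ k : ℝ)+1) := hzd (φ k)
        _ ≤ 1/((k:ℝ)+1) := by
            apply one_div_le_one_div_of_le (by positivity)
            have hk : (k:ℝ) ≤ (φ k : ℝ) := Nat.cast_le.mpr hφ.le_apply
            linarith
    · exact hzero
  have := hcod hmem
  rw [mem_singleton_iff] at this
  rw [this, norm_zero] at hafst
  norm_num at hafst

/-- zero is always in the coderivative at a graph point -/
lemma zero_mem_coderiv {F : E → Set F'} {C : Set E} {xb : E} {yb : F'}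
    (hsub : gphL2 F ⊆ cylL2 C) (hgraph : yb ∈ F xb) :
    (0:E) ∈ coderivWRT C F xb yb 0 := by
  show toL2 (0:E) (-(0:F')) ∈ limNC (cylL2 C) (gphL2 F ∩ cylL2 C) (toL2 xb yb)
  have hmem : toL2 xb yb ∈ gphL2 F ∩ cylL2 C := ⟨hgraph, hsub hgraph⟩
  have h0 : toL2 (0:E) (-(0:F')) = (0 : WithLp 2 (E × F')) := by rw [neg_zero]; rfl
  rw [h0]
  refine ⟨fun _ => toL2 xb yb, fun _ => 0, fun _ => ⟨hmem, hmem.2⟩, tendsto_const_nhds,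
    fun _ => ?_, tendsto_const_nhds⟩
  refine ⟨1, one_pos, ?_, ?_⟩
  · show toL2 xb yb + (1:ℝ) • (0 : WithLp 2 (E × F')) ∈
      projInv (toL2 xb yb) ((gphL2 F ∩ cylL2 C) ∩ cylL2 C)
    rw [smul_zero, add_zero]
    show toL2 xb yb ∈ projSet (toL2 xb yb) ((gphL2 F ∩ cylL2 C) ∩ cylL2 C)
    exact ⟨⟨hmem, hmem.2⟩, by rw [sub_self, norm_zero,
      infDist_zero_of_mem (show toL2 xb yb ∈ (gphL2 F ∩ cylL2 C) ∩ cylL2 C from ⟨hmem, hmem.2⟩)]⟩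
  · show toL2 xb yb + (1:ℝ) • (0 : WithLp 2 (E × F')) ∈ cylL2 C
    rw [smul_zero, add_zero]
    exact hmem.2

set_option maxHeartbeats 2000000 in
/-- Aubin property implies the coderivative criterion -/
lemma coderiv_sub_of_aubin {F : E → Set F'} {C : Set E} {xb : E} {yb : F'} {κ : ℝ}
    (hκ : 0 ≤ κ) (hsub : gphL2 F ⊆ cylL2 C) (hconv : Convex ℝ C)
    (haub : AubinWRT C F xb yb κ) : coderivWRT C F xb yb 0 ⊆ {0} := by
  classical
  set zbL := toL2 xb yb with hzbL
  intro xstar hxs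
  obtain ⟨U, hU, V, hV, haub⟩ := haub
  obtain ⟨δU, hδU, hUb⟩ := Metric.mem_nhds_iff.mp hU
  obtain ⟨δV, hδV, hVb⟩ := Metric.mem_nhds_iff.mp hV
  obtain ⟨zs, vs, hmem, hzt, hprox, hvt⟩ := hxs
  set δ := min δU δV with hδ
  have hδpos : 0 < δ := lt_min hδU hδV
  -- key estimate for k with zs k close to zbL
  have key : ∀ k, dist (zs k) zbL < δ → ‖(vs k).fst‖ ≤ κ * ‖(vs k).snd‖ := by
    intro k hk
    set z := zs k with hzk
    have hzgph : z ∈ gphL2 F := (hmem k).1.1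
    have hpk : vs k ∈ proxNC (cylL2 C) (gphL2 F) z := by
      have := hprox k
      rwa [inter_eq_left.2 hsub] at this
    obtain ⟨-, t, ht, hCt, hineq⟩ := prox_ineq hsub hpk
    set p := (vs k).fst with hp
    set q := (vs k).snd with hq
    by_cases hp0 : ‖p‖ = 0
    · rw [hp0]; positivity
    have hppos : 0 < ‖p‖ := lt_of_le_of_ne (norm_nonneg _) (Ne.symm hp0)
    set w : E := t • p with hw
    have hwnorm : ‖w‖ = t * ‖p‖ := by rw [hw, norm_smul, Real.norm_eq_abs, abs_of_pos ht]
    have hzfC : z.fst ∈ C := hsub hzgph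
    have hzwC : z.fst + w ∈ C := hCt
    have hzfU : z.fst ∈ U := by
      apply hUb
      rw [mem_ball]
      calc dist z.fst xb ≤ dist z zbL := aux_dist_fst_le z zbL
        _ < δ := hk
        _ ≤ δU := min_le_left _ _
    have hzsV : z.snd ∈ V := by
      apply hVb
      rw [mem_ball]
      calc dist z.snd yb ≤ dist z zbL := aux_dist_snd_le z zbL
        _ < δ := hk
        _ ≤ δV := min_le_right _ _
    have hzsF : z.snd ∈ F z.fst := hzgph
    -- gap for staying in U
    have hgap : 0 < δU - dist z.fst xb := by
      have : dist z.fst xb < δU := lt_of_le_of_lt (aux_dist_fst_le z zbL)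
        (lt_of_lt_of_le hk (min_le_left _ _))
      linarith
    set gap := δU - dist z.fst xb with hgapdef
    set s₀ : ℝ := min 1 (gap/(2*(‖w‖+1))) with hs₀
    have hs₀pos : 0 < s₀ := lt_min one_pos (by positivity)
    -- the parametric estimate
    have est : ∀ s : ℝ, 0 < s → s ≤ s₀ →
        ‖p‖^2 - κ*‖q‖*‖p‖ ≤ s*(‖p‖^2*(1+κ^2)/2) := by
      intro s hs hss
      have hs1 : s ≤ 1 := le_trans hss (min_le_left _ _)
      set x' : E := z.fst + s • w with hx'
      have hx'C : x' ∈ C := by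
        have h1 := hconv.add_smul_sub_mem hzfC hzwC ⟨hs.le, hs1⟩
        rwa [add_sub_cancel_left] at h1
      have hx'U : x' ∈ U := by
        apply hUb
        rw [mem_ball]
        have h1 : dist x' z.fst ≤ s * ‖w‖ := by
          rw [dist_eq_norm, hx', add_sub_cancel_left, norm_smul, Real.norm_eq_abs,
            abs_of_pos hs]
        have h2 : s * ‖w‖ < gap := by
          have h3 : s * ‖w‖ ≤ s₀ * ‖w‖ := mul_le_mul_of_nonneg_right hss (norm_nonneg _)
          have h4 : s₀ * ‖w‖ ≤ gap/(2*(‖w‖+1)) * ‖w‖ :=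
            mul_le_mul_of_nonneg_right (min_le_right _ _) (norm_nonneg _)
          have h5 : gap/(2*(‖w‖+1)) * ‖w‖ < gap := by
            rw [div_mul_eq_mul_div, div_lt_iff₀ (by positivity)]
            nlinarith [norm_nonneg w]
          linarith
        calc dist x' xb ≤ dist x' z.fst + dist z.fst xb := dist_triangle _ _ _
          _ < gap + dist z.fst xb := by linarith
          _ = δU := by rw [hgapdef]; ring
      obtain ⟨y', hy'F, hy'⟩ := haub x' ⟨hx'C, hx'U⟩ z.fst ⟨hzfC, hzfU⟩ z.snd ⟨hzsF, hzsV⟩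
      have hyd : ‖z.snd - y'‖ ≤ κ * (s * ‖w‖) := by
        have h1 : ‖z.fst - x'‖ = s * ‖w‖ := by
          rw [hx']
          rw [show z.fst - (z.fst + s • w) = -(s • w) by abel, norm_neg, norm_smul,
            Real.norm_eq_abs, abs_of_pos hs]
        calc ‖z.snd - y'‖ ≤ κ * ‖z.fst - x'‖ := hy'
          _ = κ * (s * ‖w‖) := by rw [h1]
      set g := toL2 x' y' with hg
      have hgS : g ∈ gphL2 F := hy'F
      have hgz : g - z = toL2 (s • w) (y' - z.snd) := by
        have h1 : g - z = toL2 (x' - z.fst) (y' - z.snd) := rfl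
        rw [h1, hx', add_sub_cancel_left]
      have hIL : ⟪vs k, g - z⟫ = ⟪p, s • w⟫ + ⟪q, y' - z.snd⟫ := by
        rw [hgz, WithLp.prod_inner_apply]
        rfl
      have hIP : ⟪p, s • w⟫ = s * t * ‖p‖^2 := by
        rw [hw, real_inner_smul_right, real_inner_smul_right, real_inner_self_eq_norm_sq]
        ring
      have hIQ : -(κ * (s * ‖w‖) * ‖q‖) ≤ ⟪q, y' - z.snd⟫ := by
        have h1 : |⟪q, y' - z.snd⟫| ≤ ‖q‖ * ‖y' - z.snd‖ := abs_real_inner_le_norm _ _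
        have h2 : ‖y' - z.snd‖ ≤ κ * (s * ‖w‖) := by rw [norm_sub_rev]; exact hyd
        have h3 : ‖q‖ * ‖y' - z.snd‖ ≤ ‖q‖ * (κ * (s * ‖w‖)) :=
          mul_le_mul_of_nonneg_left h2 (norm_nonneg _)
        have h4 := neg_abs_le ⟪q, y' - z.snd⟫
        nlinarith [abs_nonneg ⟪q, y' - z.snd⟫]
      have hRB : ‖g - z‖^2 ≤ s^2 * ‖w‖^2 * (1+κ^2) := by
        rw [hgz, norm_toL2_sq]
        have h1 : ‖s • w‖^2 = s^2 * ‖w‖^2 := by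
          rw [norm_smul, Real.norm_eq_abs, mul_pow, sq_abs]
        have h2 : ‖y' - z.snd‖^2 ≤ κ^2 * (s^2 * ‖w‖^2) := by
          have h3 : ‖y' - z.snd‖ ≤ κ * (s * ‖w‖) := by rw [norm_sub_rev]; exact hyd
          nlinarith [norm_nonneg (y' - z.snd), mul_nonneg (mul_nonneg hκ hs.le) (norm_nonneg w)]
        rw [h1]
        nlinarith
      have hmain := hineq g hgS
      rw [hIL, hIP] at hmain
      have h6 : s * t * ‖p‖^2 - κ * (s * ‖w‖) * ‖q‖ ≤ s^2 * ‖w‖^2 * (1+κ^2) / (2*t) := by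
        have h5 : ‖g - z‖^2 / (2*t) ≤ s^2 * ‖w‖^2 * (1+κ^2) / (2*t) := by gcongr
        linarith [hmain, hIQ]
      rw [hwnorm] at h6
      have hst : 0 < s * t := by positivity
      have h7 : s*t*(‖p‖^2 - κ*‖q‖*‖p‖) ≤ s*t*(s*(‖p‖^2*(1+κ^2)/2)) := by
        calc s*t*(‖p‖^2 - κ*‖q‖*‖p‖) = s*t*‖p‖^2 - κ*(s*(t*‖p‖))*‖q‖ := by ring
          _ ≤ s^2*(t*‖p‖)^2*(1+κ^2)/(2*t) := h6
          _ = s*t*(s*(‖p‖^2*(1+κ^2)/2)) := by field_simp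
      exact le_of_mul_le_mul_left h7 hst
    -- pass to the limit s → 0
    have hconc : ‖p‖^2 - κ*‖q‖*‖p‖ ≤ 0 := by
      apply le_of_forall_sub_le
      intro ε' hε'
      set Cst := ‖p‖^2*(1+κ^2)/2 with hCst
      have hCst0 : 0 ≤ Cst := by rw [hCst]; positivity
      set s := min s₀ (ε'/(Cst+1)) with hsdef
      have hspos : 0 < s := lt_min hs₀pos (by positivity)
      have h8 := est s hspos (min_le_left _ _)
      have h9 : s * Cst ≤ ε' := by
        have h10 : s ≤ ε'/(Cst+1) := min_le_right _ _
        calc s * Cst ≤ (ε'/(Cst+1)) * Cst := mul_le_mul_of_nonneg_right h10 hCst0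
          _ ≤ ε' := by
              rw [div_mul_eq_mul_div, div_le_iff₀ (by positivity)]
              nlinarith
      linarith [h8, h9]
    nlinarith [hppos]
  -- now take limits in k
  obtain ⟨N, hN⟩ := Metric.tendsto_atTop.mp hzt δ hδpos
  have hevk : ∀ k ≥ N, ‖(vs k).fst‖ ≤ κ * ‖(vs k).snd‖ := fun k hk => key k (hN k hk)
  have hfst : Tendsto (fun k => (vs k).fst) atTop (𝓝 xstar) := by
    have h1 := (aux_cont_fst.tendsto (toL2 xstar (-(0:F')))).comp hvt
    exact h1
  have hsnd : Tendsto (fun k => (vs k).snd) atTop (𝓝 (0:F')) := by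
    have h1 := (aux_cont_snd.tendsto (toL2 xstar (-(0:F')))).comp hvt
    have h2 : (toL2 xstar (-(0:F'))).snd = 0 := by
      rw [show (toL2 xstar (-(0:F'))).snd = -(0:F') from rfl, neg_zero]
    rwa [h2] at h1
  have hnf : Tendsto (fun k => ‖(vs k).fst‖) atTop (𝓝 ‖xstar‖) := hfst.norm
  have hns : Tendsto (fun k => κ * ‖(vs k).snd‖) atTop (𝓝 (κ * ‖(0:F')‖)) :=
    (hsnd.norm).const_mul κ
  rw [norm_zero, mul_zero] at hns
  have hle0 : ‖xstar‖ ≤ 0 :=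
    le_of_tendsto_of_tendsto hnf hns (eventually_atTop.mpr ⟨N, hevk⟩)
  exact mem_singleton_iff.mpr (norm_le_zero_iff.mp hle0)

/-- one projection step -/
lemma step_lemma {F : E → Set F'} {C : Set E} {xb : E} {yb : F'} {r κ ε ρ : ℝ}
    (hgraph : yb ∈ F xb) (hcl : IsClosed (gphL2 F ∩ closedBall (toL2 xb yb) r))
    (hsub : gphL2 F ⊆ cylL2 C) (hconv : Convex ℝ C) (hκ : 0 ≤ κ)
    (hpne : ∀ z ∈ gphL2 F, dist z (toL2 xb yb) ≤ ε →
      ∀ v ∈ proxNC (cylL2 C) (gphL2 F ∩ cylL2 C) z,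
        ‖(v : WithLp 2 (E × F')).fst‖ ≤ κ * ‖v.snd‖)
    (hρε : 3*ρ ≤ ε) (hρr : 4*ρ ≤ r)
    {x a : E} {b : F'} (hxC : x ∈ C) (hb : b ∈ F a)
    (ha : dist (toL2 a b) (toL2 xb yb) ≤ ρ) (hxa : ‖x - a‖ ≤ ρ) :
    ∃ a' b', b' ∈ F a' ∧
      ‖x - a'‖ ≤ (κ / Real.sqrt (1+κ^2))^2 * ‖x - a‖ ∧
      ‖b - b'‖ ≤ (κ / Real.sqrt (1+κ^2)) * ‖x - a‖ := by
  set zb := toL2 xb yb with hzb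
  set c := κ / Real.sqrt (1+κ^2) with hc
  have hc0 : 0 ≤ c := by rw [hc]; positivity
  have hc1 : c < 1 := by
    rw [hc, div_lt_one (Real.sqrt_pos.2 (by positivity))]
    nth_rewrite 1 [show κ = Real.sqrt (κ^2) from (Real.sqrt_sq hκ).symm]
    exact Real.sqrt_lt_sqrt (by positivity) (by nlinarith)
  have hρ0 : 0 ≤ ρ := le_trans dist_nonneg ha
  have hseg := seg hgraph hcl hsub hconv hκ hpne hρε hρr hxC hb ha hxa
  set z := toL2 x b with hz
  have hd2 : dist z zb ≤ r/2 := by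
    calc dist z zb ≤ dist z (toL2 a b) + dist (toL2 a b) zb := dist_triangle _ _ _
      _ ≤ ρ + ρ := by
          rw [hz, dist_toL2_fst]
          exact add_le_add hxa ha
      _ ≤ r/2 := by linarith
  obtain ⟨w, hwΩ, hwdist, hwproj, -⟩ := glob (show zb ∈ gphL2 F from hgraph) hcl hd2
  have hwd : dist z w ≤ c * ‖x - a‖ := by rw [hwdist]; exact hseg
  have hwz : dist w zb ≤ ε := by
    have h1 : dist w z ≤ ρ := by
      rw [dist_comm]
      calc dist z w ≤ c * ‖x - a‖ := hwd
        _ ≤ 1 * ρ := mul_le_mul hc1.le hxa (norm_nonneg _) one_pos.le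
        _ = ρ := one_mul ρ
    calc dist w zb ≤ dist w z + dist z zb := dist_triangle _ _ _
      _ ≤ ρ + (ρ + ρ) := by
          refine add_le_add h1 ?_
          calc dist z zb ≤ dist z (toL2 a b) + dist (toL2 a b) zb := dist_triangle _ _ _
            _ ≤ ρ + ρ := by rw [hz, dist_toL2_fst]; exact add_le_add hxa ha
      _ ≤ ε := by linarith
  set v := z - w with hv
  have hproxv : v ∈ proxNC (cylL2 C) (gphL2 F ∩ cylL2 C) w := by
    rw [inter_eq_left.2 hsub]
    exact proxmem hsub hwproj (show z ∈ cylL2 C from hxC)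
  have hvfs : ‖v.fst‖ ≤ κ * ‖v.snd‖ := hpne w hwΩ.1 hwz v hproxv
  have hvnorm : ‖v‖ ≤ c * ‖x - a‖ := by rw [hv, ← dist_eq_norm]; exact hwd
  have hfc : ‖v.fst‖ ≤ c * ‖v‖ := by
    apply fst_le_c hκ (norm_nonneg _) (norm_nonneg _) (norm_nonneg _) hvfs
    exact le_of_eq (WithLp.prod_norm_sq_eq_of_L2 v).symm
  refine ⟨w.fst, w.snd, hwΩ.1, ?_, ?_⟩
  · have h1 : v.fst = x - w.fst := rfl
    rw [← h1]
    calc ‖v.fst‖ ≤ c * ‖v‖ := hfc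
      _ ≤ c * (c * ‖x - a‖) := mul_le_mul_of_nonneg_left hvnorm hc0
      _ = c^2 * ‖x - a‖ := by ring
  · have h1 : v.snd = b - w.snd := rfl
    rw [← h1]
    calc ‖v.snd‖ ≤ ‖v‖ := aux_norm_snd_le v
      _ ≤ c * ‖x - a‖ := hvnorm

set_option maxHeartbeats 2000000 in
lemma aubin_of_pne {F : E → Set F'} {C : Set E} {xb : E} {yb : F'} {r κ ε : ℝ}
    (hgraph : yb ∈ F xb) (hr : 0 < r)
    (hcl : IsClosed (gphL2 F ∩ closedBall (toL2 xb yb) r))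
    (hsub : gphL2 F ⊆ cylL2 C) (hconv : Convex ℝ C)
    (hκ : 0 ≤ κ) (hε : 0 < ε)
    (hpne : ∀ z ∈ gphL2 F, dist z (toL2 xb yb) ≤ ε →
      ∀ v ∈ proxNC (cylL2 C) (gphL2 F ∩ cylL2 C) z,
        ‖(v : WithLp 2 (E × F')).fst‖ ≤ κ * ‖v.snd‖) :
    ∃ κ' : ℝ, 0 ≤ κ' ∧ AubinWRT C F xb yb κ' := by
  classical
  set zb := toL2 xb yb with hzb
  set c := κ / Real.sqrt (1+κ^2) with hc
  have hc0 : 0 ≤ c := by rw [hc]; positivity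
  have hc1 : c < 1 := by
    rw [hc, div_lt_one (Real.sqrt_pos.2 (by positivity))]
    nth_rewrite 1 [show κ = Real.sqrt (κ^2) from (Real.sqrt_sq hκ).symm]
    exact Real.sqrt_lt_sqrt (by positivity) (by nlinarith)
  have hc2 : 0 < 1 - c^2 := by nlinarith
  set κ' : ℝ := c / (1 - c^2) with hκ'
  have hκ'0 : 0 ≤ κ' := by rw [hκ']; positivity
  have hkc : κ' * (1 - c^2) = c := by rw [hκ']; field_simp
  set ρ : ℝ := min ε r / 4 with hρ
  have hρ0 : 0 < ρ := by rw [hρ]; have := lt_min hε hr; positivity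
  have hρε : 3*ρ ≤ ε := by
    have : ρ ≤ ε/4 := by rw [hρ]; exact div_le_div_of_nonneg_right (min_le_left _ _) (by norm_num)
    linarith
  have hρr : 4*ρ ≤ r := by
    have : ρ ≤ r/4 := by rw [hρ]; exact div_le_div_of_nonneg_right (min_le_right _ _) (by norm_num)
    linarith
  set ρ' : ℝ := ρ / (5 + 2*κ') with hρ'
  have hρ'0 : 0 < ρ' := by rw [hρ']; positivity
  have hρ'ρ : (4 + 2*κ') * ρ' ≤ ρ := by
    rw [hρ', ← mul_div_assoc, div_le_iff₀ (by positivity : (0:ℝ) < 5 + 2*κ')]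
    nlinarith [hρ0.le]
  have h2ρ' : 2 * ρ' ≤ ρ := by nlinarith [hρ'0.le, hκ'0]
  refine ⟨κ', hκ'0, ball xb ρ', ball_mem_nhds xb hρ'0, ball yb ρ', ball_mem_nhds yb hρ'0,
    ?_⟩
  rintro x ⟨hxC, hxU⟩ u ⟨huC, huU⟩ y ⟨hyF, hyV⟩
  rw [mem_ball] at hxU huU hyV
  set D := ‖x - u‖ with hD
  have hD0 : 0 ≤ D := norm_nonneg _
  have hDle : D ≤ 2*ρ' := by
    calc D ≤ ‖x - xb‖ + ‖xb - u‖ := norm_sub_le_norm_sub_add_norm_sub x xb u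
      _ ≤ ρ' + ρ' := by
          refine add_le_add ?_ ?_
          · rw [← dist_eq_norm]; exact hxU.le
          · rw [← dist_eq_norm, dist_comm]; exact huU.le
      _ = 2*ρ' := by ring
  -- the step function
  have hstep : ∀ p : E × F', ∃ q : E × F',
      (p.2 ∈ F p.1 ∧ dist (toL2 p.1 p.2) zb ≤ ρ ∧ ‖x - p.1‖ ≤ ρ) →
      (q.2 ∈ F q.1 ∧ ‖x - q.1‖ ≤ c^2 * ‖x - p.1‖ ∧ ‖p.2 - q.2‖ ≤ c * ‖x - p.1‖) := by
    intro p
    by_cases hp : p.2 ∈ F p.1 ∧ dist (toL2 p.1 p.2) zb ≤ ρ ∧ ‖x - p.1‖ ≤ ρ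
    · obtain ⟨a', b', h1, h2, h3⟩ := step_lemma hgraph hcl hsub hconv hκ hpne hρε hρr
        hxC hp.1 hp.2.1 hp.2.2
      exact ⟨(a', b'), fun _ => ⟨h1, h2, h3⟩⟩
    · exact ⟨p, fun h => absurd h hp⟩
  choose st hst using hstep
  set sq : ℕ → E × F' := fun k => st^[k] (u, y) with hsq
  have hsq0 : sq 0 = (u, y) := rfl
  have hsqS : ∀ k, sq (k+1) = st (sq k) := by
    intro k
    rw [hsq]
    exact Function.iterate_succ_apply' st k (u, y)
  -- invariant
  set J : ℕ → Prop := fun k => (sq k).2 ∈ F (sq k).1 ∧ ‖x - (sq k).1‖ ≤ c^(2*k) * D ∧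
      ‖(sq k).2 - y‖ ≤ κ' * (1 - c^(2*k)) * D with hJ
  have hJH : ∀ k, J k → ((sq k).2 ∈ F (sq k).1 ∧ dist (toL2 (sq k).1 (sq k).2) zb ≤ ρ ∧
      ‖x - (sq k).1‖ ≤ ρ) := by
    intro k hk
    obtain ⟨h1, h2, h3⟩ := hk
    have hpow1 : c^(2*k) ≤ 1 := pow_le_one₀ hc0 hc1.le
    have hxak : ‖x - (sq k).1‖ ≤ D := by
      calc ‖x - (sq k).1‖ ≤ c^(2*k) * D := h2
        _ ≤ 1 * D := mul_le_mul_of_nonneg_right hpow1 hD0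
        _ = D := one_mul D
    have hbk : ‖(sq k).2 - y‖ ≤ κ' * D := by
      calc ‖(sq k).2 - y‖ ≤ κ' * (1 - c^(2*k)) * D := h3
        _ ≤ κ' * 1 * D := by
            refine mul_le_mul_of_nonneg_right ?_ hD0
            refine mul_le_mul_of_nonneg_left ?_ hκ'0
            nlinarith [pow_nonneg hc0 (2*k)]
        _ = κ' * D := by ring
    refine ⟨h1, ?_, le_trans hxak (le_trans hDle h2ρ')⟩
    calc dist (toL2 (sq k).1 (sq k).2) zb ≤ ‖(sq k).1 - xb‖ + ‖(sq k).2 - yb‖ :=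
          dist_toL2_le _ _ _ _
      _ ≤ (‖(sq k).1 - x‖ + ‖x - xb‖) + (‖(sq k).2 - y‖ + ‖y - yb‖) := by
          refine add_le_add (norm_sub_le_norm_sub_add_norm_sub _ _ _)
            (norm_sub_le_norm_sub_add_norm_sub _ _ _)
      _ ≤ (D + ρ') + (κ' * D + ρ') := by
          refine add_le_add (add_le_add ?_ ?_) (add_le_add hbk ?_)
          · rw [norm_sub_rev]; exact hxak
          · rw [← dist_eq_norm]; exact hxU.le
          · rw [← dist_eq_norm]; exact hyV.le
      _ ≤ (4 + 2*κ') * ρ' := by nlinarith [hDle, hκ'0]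
      _ ≤ ρ := hρ'ρ
  have hJall : ∀ k, J k := by
    intro k
    induction k with
    | zero =>
      refine ⟨hyF, ?_, ?_⟩
      · rw [hsq0, Nat.mul_zero, pow_zero, one_mul]
      · rw [hsq0]
        simp
    | succ k ih =>
      have hH := hJH k ih
      have hP := hst (sq k) hH
      rw [← hsqS k] at hP
      obtain ⟨h1, h2, h3⟩ := hP
      obtain ⟨-, i2, i3⟩ := ih
      refine ⟨h1, ?_, ?_⟩
      · calc ‖x - (sq (k+1)).1‖ ≤ c^2 * ‖x - (sq k).1‖ := h2
          _ ≤ c^2 * (c^(2*k) * D) := mul_le_mul_of_nonneg_left i2 (by positivity)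
          _ = c^(2*(k+1)) * D := by rw [pow_mul, pow_mul, pow_succ]; ring
      · have hck : κ' * (c^(2*k) - c^(2*k) * c^2) = c * c^(2*k) := by
          have : κ' * (1 - c^2) * c^(2*k) = c * c^(2*k) := by rw [hkc]
          nlinarith [this]
        calc ‖(sq (k+1)).2 - y‖ ≤ ‖(sq (k+1)).2 - (sq k).2‖ + ‖(sq k).2 - y‖ :=
              norm_sub_le_norm_sub_add_norm_sub _ _ _
          _ ≤ c * (c^(2*k) * D) + κ' * (1 - c^(2*k)) * D := by
              refine add_le_add ?_ i3
              rw [norm_sub_rev]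
              calc ‖(sq k).2 - (sq (k+1)).2‖ ≤ c * ‖x - (sq k).1‖ := h3
                _ ≤ c * (c^(2*k) * D) := mul_le_mul_of_nonneg_left i2 hc0
          _ ≤ κ' * (1 - c^(2*(k+1))) * D := by
              have hpe : c^(2*(k+1)) = c^(2*k) * c^2 := by
                rw [pow_mul, pow_mul, pow_succ]
              rw [hpe]
              nlinarith [hD0, hck]
  -- consecutive bound
  have hcons : ∀ k, dist ((sq k).2) ((sq (k+1)).2) ≤ (c*D) * (c^2)^k := by
    intro k
    have hH := hJH k (hJall k)
    have hP := hst (sq k) hH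
    rw [← hsqS k] at hP
    rw [dist_eq_norm]
    calc ‖(sq k).2 - (sq (k+1)).2‖ ≤ c * ‖x - (sq k).1‖ := hP.2.2
      _ ≤ c * (c^(2*k) * D) := mul_le_mul_of_nonneg_left (hJall k).2.1 hc0
      _ = (c*D) * (c^2)^k := by rw [← pow_mul]; ring
  have hcauchy : CauchySeq (fun k => (sq k).2) :=
    cauchySeq_of_le_geometric (c^2) (c*D) (by nlinarith) hcons
  obtain ⟨yinf, hyinf⟩ := cauchySeq_tendsto_of_complete hcauchy
  -- first components tend to x
  have hgeo : Tendsto (fun k : ℕ => (c^2)^k * D) atTop (𝓝 0) := by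
    have h1 : Tendsto (fun k : ℕ => (c^2)^k) atTop (𝓝 (0:ℝ)) :=
      tendsto_pow_atTop_nhds_zero_of_lt_one (by positivity) (by nlinarith)
    simpa using h1.mul_const D
  have hfst : Tendsto (fun k => (sq k).1) atTop (𝓝 x) := by
    rw [tendsto_iff_dist_tendsto_zero]
    apply squeeze_zero (fun k => dist_nonneg) (fun k => ?_) hgeo
    calc dist (sq k).1 x = ‖x - (sq k).1‖ := by rw [dist_comm, dist_eq_norm]
      _ ≤ c^(2*k) * D := (hJall k).2.1
      _ = (c^2)^k * D := by rw [pow_mul]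
  -- the L2 points converge
  have hL2t : Tendsto (fun k => toL2 (sq k).1 (sq k).2) atTop (𝓝 (toL2 x yinf)) := by
    have h1 : Tendsto (fun k => ((sq k).1, (sq k).2)) atTop (𝓝 (x, yinf)) :=
      hfst.prodMk_nhds hyinf
    exact ((WithLp.prod_continuous_toLp 2 E F').tendsto (x, yinf)).comp h1
  have hmemΩ : ∀ k, toL2 (sq k).1 (sq k).2 ∈ gphL2 F ∩ closedBall zb r := by
    intro k
    refine ⟨(hJall k).1, ?_⟩
    rw [mem_closedBall]
    have h1 := (hJH k (hJall k)).2.1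
    calc dist (toL2 (sq k).1 (sq k).2) zb ≤ ρ := h1
      _ ≤ r := by linarith
  have hlimmem : toL2 x yinf ∈ gphL2 F ∩ closedBall zb r :=
    hcl.mem_of_tendsto hL2t (Filter.Eventually.of_forall hmemΩ)
  refine ⟨yinf, hlimmem.1, ?_⟩
  -- the norm bound
  have hbd : ∀ k, ‖y - (sq k).2‖ ≤ κ' * D := by
    intro k
    rw [norm_sub_rev]
    calc ‖(sq k).2 - y‖ ≤ κ' * (1 - c^(2*k)) * D := (hJall k).2.2
      _ ≤ κ' * 1 * D := by
          refine mul_le_mul_of_nonneg_right (mul_le_mul_of_nonneg_left ?_ hκ'0) hD0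
          nlinarith [pow_nonneg hc0 (2*k)]
      _ = κ' * D := by ring
  have hnt : Tendsto (fun k => ‖y - (sq k).2‖) atTop (𝓝 ‖y - yinf‖) :=
    (Tendsto.const_sub y hyinf).norm
  have hfin : ‖y - yinf‖ ≤ κ' * D := le_of_tendsto hnt (Filter.Eventually.of_forall hbd)
  calc ‖y - yinf‖ ≤ κ' * D := hfin
    _ = κ' * ‖u - x‖ := by rw [hD, norm_sub_rev]

end MainProof

/-- Corollary 1: the relative Aubin property holds around `(xb,yb)` iff
`D̄*F(xb,yb)(0) = {0}`. -/
theorem stmt12 {n m : ℕ} (F : EuclideanSpace ℝ (Fin n) → Set (EuclideanSpace ℝ (Fin m)))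
    (hdomne : {x : EuclideanSpace ℝ (Fin n) | (F x).Nonempty}.Nonempty)
    (hdomcl : IsClosed {x : EuclideanSpace ℝ (Fin n) | (F x).Nonempty})
    (hdomcv : Convex ℝ {x : EuclideanSpace ℝ (Fin n) | (F x).Nonempty})
    (xb : EuclideanSpace ℝ (Fin n)) (yb : EuclideanSpace ℝ (Fin m)) (hgph : yb ∈ F xb)
    (hloc : ∃ r > (0 : ℝ), IsClosed (gphL2 F ∩ Metric.closedBall (toL2 xb yb) r)) :
    (∃ κ : ℝ, 0 ≤ κ ∧ AubinWRT {x : EuclideanSpace ℝ (Fin n) | (F x).Nonempty} F xb yb κ) ↔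
      coderivWRT {x : EuclideanSpace ℝ (Fin n) | (F x).Nonempty} F xb yb 0 = {(0 : EuclideanSpace ℝ (Fin n))} := by
  classical
  constructor
  · rintro ⟨κ, hκ0, haub⟩
    apply Set.eq_singleton_iff_unique_mem.mpr
    have hsub : gphL2 F ⊆ cylL2 {x : EuclideanSpace ℝ (Fin n) | (F x).Nonempty} :=
      fun p hp => ⟨p.snd, hp⟩
    refine ⟨zero_mem_coderiv hsub hgph, fun xs hxs => ?_⟩
    exact Set.mem_singleton_iff.mp (coderiv_sub_of_aubin hκ0 hsub hdomcv haub hxs)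
  · intro hcod
    have hsub : gphL2 F ⊆ cylL2 {x : EuclideanSpace ℝ (Fin n) | (F x).Nonempty} :=
      fun p hp => ⟨p.snd, hp⟩
    obtain ⟨r, hr, hcl⟩ := hloc
    have hsubset : coderivWRT {x : EuclideanSpace ℝ (Fin n) | (F x).Nonempty} F xb yb 0 ⊆ {0} :=
      le_of_eq hcod
    obtain ⟨κ, hκ0, ε, hε, hpne⟩ := pne_of_coderiv hsub hsubset
    obtain ⟨κ', hκ'0, haub⟩ := aubin_of_pne hgph hr hcl hsub hdomcv hκ0 hε hpne
    exact ⟨κ', hκ'0, haub⟩
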